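/- arXiv:1405.4929 — 3 statements merged into one kernel-verified Lean document; each statement's English description precedes it below -/
import Mathlib

section
/- For all relations P = (A,B,R) and Q = (C,B,T), the games G(P,Q) and G_1(Dom(P), Dom(Q)) are dual: ONE has a winning strategy in G(P,Q) if and only if TWO has a winning strategy in G_1(Dom(P), Dom(Q)), and TWO has a winning strategy in G(P,Q) if and only if ONE has a winning strategy in G_1(Dom(P), Dom(Q)). -/
open Set

/-- `GDom R` is the set of dominating families of the relation `R`:
sets `Z ⊆ B` such that every `a ∈ A` is dominated by some `b ∈ Z`. -/
def GDom {α β : Type*} (R : α → β → Prop) : Set (Set β) :=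
  {Z | ∀ a : α, ∃ b ∈ Z, R a b}

/-- A relation is total: every element of the domain is dominated by something. -/
def IsTotalRel {α β : Type*} (R : α → β → Prop) : Prop :=
  ∀ a : α, ∃ b : β, R a b

/-- The product of two relations. -/
def GProd {α β α' β' : Type*} (R : α → β → Prop) (R' : α' → β' → Prop) :
    α × α' → β × β' → Prop :=
  fun a b => R a.1 b.1 ∧ R' a.2 b.2

/-- The finite history consisting of the first `n` moves of the sequence `b`. -/
def GHist {β : Type*} (b : ℕ → β) (n : ℕ) : List β :=
  List.ofFn fun i : Fin n => b i

/-- ONE has a winning strategy in the game `G(P,Q)`: in inning `n` ONE plays `aₙ ∈ A`,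
TWO answers `bₙ` with `R aₙ bₙ`; ONE wins iff `{bₙ : n} ∈ GDom T`. -/
def OneWinsG {α β γ : Type*} (R : α → β → Prop) (T : γ → β → Prop) : Prop :=
  ∃ σ : List β → α, ∀ b : ℕ → β,
    (∀ n, R (σ (GHist b n)) (b n)) → Set.range b ∈ GDom T

/-- TWO has a winning strategy in the game `G(P,Q)`. -/
def TwoWinsG {α β γ : Type*} (R : α → β → Prop) (T : γ → β → Prop) : Prop :=
  ∃ τ : List α → β, ∀ a : ℕ → α,
    (∀ n, R (a n) (τ (GHist a (n + 1)))) ∧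
    Set.range (fun n => τ (GHist a (n + 1))) ∉ GDom T

/-- ONE has a winning strategy in the game `G₁(𝒜,ℬ)`: in inning `n` ONE plays `Aₙ ∈ 𝒜`,
TWO answers `bₙ ∈ Aₙ`; TWO wins iff `{bₙ : n} ∈ ℬ`. -/
def OneWinsG1 {β : Type*} (𝒜 ℬ : Set (Set β)) : Prop :=
  ∃ σ : List β → Set β, (∀ h, σ h ∈ 𝒜) ∧
    ∀ b : ℕ → β, (∀ n, b n ∈ σ (GHist b n)) → Set.range b ∉ ℬ

/-- TWO has a winning strategy in the game `G₁(𝒜,ℬ)`. -/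
def TwoWinsG1 {β : Type*} (𝒜 ℬ : Set (Set β)) : Prop :=
  ∃ τ : List (Set β) → β, ∀ S : ℕ → Set β, (∀ n, S n ∈ 𝒜) →
    (∀ n, τ (GHist S (n + 1)) ∈ S n) ∧
    Set.range (fun n => τ (GHist S (n + 1))) ∈ ℬ

/-- TWO has a winning strategy in the game `G_fin(𝒜,ℬ)`: in inning `n` ONE plays `Aₙ ∈ 𝒜`,
TWO answers a finite `Fₙ ⊆ Aₙ`; TWO wins iff `⋃ₙ Fₙ ∈ ℬ`. -/
def TwoWinsGfin {β : Type*} (𝒜 ℬ : Set (Set β)) : Prop :=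
  ∃ τ : List (Set β) → Set β, ∀ S : ℕ → Set β, (∀ n, S n ∈ 𝒜) →
    (∀ n, τ (GHist S (n + 1)) ⊆ S n ∧ (τ (GHist S (n + 1))).Finite) ∧
    (⋃ n, τ (GHist S (n + 1))) ∈ ℬ

/-- `(𝒜,ℬ)`-Lindelöf: every member of `𝒜` has a countable subset belonging to `ℬ`. -/
def LindelofFam {β : Type*} (𝒜 ℬ : Set (Set β)) : Prop :=
  ∀ S ∈ 𝒜, ∃ C ⊆ S, C.Countable ∧ C ∈ ℬ

/-- The selection principle `S₁(𝒜,ℬ)`. -/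
def SelS1 {β : Type*} (𝒜 ℬ : Set (Set β)) : Prop :=
  ∀ A : ℕ → Set β, (∀ n, A n ∈ 𝒜) →
    ∃ b : ℕ → β, (∀ n, b n ∈ A n) ∧ Set.range b ∈ ℬ

/-- The selection principle `S_fin(𝒜,ℬ)`. -/
def SelSfin {β : Type*} (𝒜 ℬ : Set (Set β)) : Prop :=
  ∀ A : ℕ → Set β, (∀ n, A n ∈ 𝒜) →
    ∃ F : ℕ → Set β, (∀ n, F n ⊆ A n ∧ (F n).Finite) ∧ (⋃ n, F n) ∈ ℬ

/-- `𝒪_X`: the family of open covers of `X`. -/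
def OpenCovers (X : Type*) [TopologicalSpace X] : Set (Set (Set X)) :=
  {𝒰 | (∀ U ∈ 𝒰, IsOpen U) ∧ ⋃₀ 𝒰 = Set.univ}

/-- ONE has a winning strategy in the point-open game on `X`. -/
def OneWinsPointOpen (X : Type*) [TopologicalSpace X] : Prop :=
  ∃ σ : List (Set X) → X, ∀ U : ℕ → Set X,
    (∀ n, IsOpen (U n) ∧ σ (GHist U n) ∈ U n) → Set.range U ∈ OpenCovers X

/-- TWO has a winning strategy in the point-open game on `X`. -/
def TwoWinsPointOpen (X : Type*) [TopologicalSpace X] : Prop :=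
  ∃ τ : List X → Set X, ∀ x : ℕ → X,
    (∀ n, IsOpen (τ (GHist x (n + 1))) ∧ x n ∈ τ (GHist x (n + 1))) ∧
    Set.range (fun n => τ (GHist x (n + 1))) ∉ OpenCovers X

/-- `𝔇_X`: the family of dense subsets of `X`. -/
def DenseSets (X : Type*) [TopologicalSpace X] : Set (Set X) :=
  {D | Dense D}

/-- ONE has a winning strategy in the point-picking game `G^D_ω(X)` of Berner and Juhász. -/
def OneWinsPointPicking (X : Type*) [TopologicalSpace X] : Prop :=
  ∃ σ : List X → Set X, (∀ h, IsOpen (σ h) ∧ (σ h).Nonempty) ∧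
    ∀ x : ℕ → X, (∀ n, x n ∈ σ (GHist x n)) → Dense (Set.range x)

/-- TWO has a winning strategy in the point-picking game `G^D_ω(X)`. -/
def TwoWinsPointPicking (X : Type*) [TopologicalSpace X] : Prop :=
  ∃ τ : List (Set X) → X, ∀ U : ℕ → Set X,
    (∀ n, IsOpen (U n) ∧ (U n).Nonempty) →
    (∀ n, τ (GHist U (n + 1)) ∈ U n) ∧
    ¬ Dense (Set.range fun n => τ (GHist U (n + 1)))

/-- `𝒟_X`: families of open sets whose union is dense in `X`. -/
def DenseUnionFams (X : Type*) [TopologicalSpace X] : Set (Set (Set X)) :=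
  {𝒰 | (∀ U ∈ 𝒰, IsOpen U) ∧ Dense (⋃₀ 𝒰)}

/-- ONE has a winning strategy in Tkachuk's game `θ(X)`. -/
def OneWinsTheta (X : Type*) [TopologicalSpace X] : Prop :=
  ∃ σ : List (Set X) → X, ∀ U : ℕ → Set X,
    (∀ n, IsOpen (U n) ∧ σ (GHist U n) ∈ U n) → Dense (⋃ n, U n)

/-- TWO has a winning strategy in Tkachuk's game `θ(X)`. -/
def TwoWinsTheta (X : Type*) [TopologicalSpace X] : Prop :=
  ∃ τ : List X → Set X, ∀ x : ℕ → X,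
    (∀ n, IsOpen (τ (GHist x (n + 1))) ∧ x n ∈ τ (GHist x (n + 1))) ∧
    ¬ Dense (⋃ n, τ (GHist x (n + 1)))

/-- `Ω_x`: the family of subsets of `X` having `x` in their closure. -/
def OmegaPt {X : Type*} [TopologicalSpace X] (x : X) : Set (Set X) :=
  {A | x ∈ closure A}

/-- ONE has a winning strategy in Gruenhage's game `G^c_{O,P}(X,x)`. -/
def OneWinsGruenhage {X : Type*} [TopologicalSpace X] (x : X) : Prop :=
  ∃ σ : List X → Set X, (∀ h, IsOpen (σ h) ∧ x ∈ σ h) ∧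
    ∀ y : ℕ → X, (∀ n, y n ∈ σ (GHist y n)) → x ∈ closure (Set.range y)

/-- TWO has a winning strategy in Gruenhage's game `G^c_{O,P}(X,x)`. -/
def TwoWinsGruenhage {X : Type*} [TopologicalSpace X] (x : X) : Prop :=
  ∃ τ : List (Set X) → X, ∀ V : ℕ → Set X,
    (∀ n, IsOpen (V n) ∧ x ∈ V n) →
    (∀ n, τ (GHist V (n + 1)) ∈ V n) ∧
    x ∉ closure (Set.range fun n => τ (GHist V (n + 1)))

/-- ONE has a winning strategy in the compact-open game on `X`. -/
def OneWinsCompactOpen (X : Type*) [TopologicalSpace X] : Prop :=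
  ∃ σ : List (Set X) → Set X, (∀ h, IsCompact (σ h)) ∧
    ∀ U : ℕ → Set X, (∀ n, IsOpen (U n) ∧ σ (GHist U n) ⊆ U n) →
      (⋃ n, U n) = Set.univ

/-- `⪯` is downwards `P`-compatible. -/
def DownwardsCompat {α β : Type*} (R : α → β → Prop) (le : β → β → Prop) : Prop :=
  ∀ a b₁ b₂, R a b₁ → R a b₂ → ∃ b, R a b ∧ le b b₁ ∧ le b b₂

/-- `⪯` is upwards `Q`-compatible. -/
def UpwardsCompat {γ β : Type*} (T : γ → β → Prop) (le : β → β → Prop) : Prop :=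
  ∀ c b₁ b₂, T c b₁ → le b₁ b₂ → T c b₂

/-- `⪯` is countably downwards `P`-compatible. -/
def CountablyDownwardsCompat {α β : Type*} (R : α → β → Prop) (le : β → β → Prop) : Prop :=
  ∀ a, ∀ E : Set β, E.Countable → E.Nonempty → (∀ b ∈ E, R a b) →
    ∃ b', R a b' ∧ ∀ b ∈ E, le b' b

/-- A relation is `ℵ₀`-preserving if some partial order on `B` is both upwards
compatible and countably downwards compatible with it. -/
def Aleph0Preserving {α β : Type*} (R : α → β → Prop) : Prop :=
  ∃ le : β → β → Prop, IsPartialOrder β le ∧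
    UpwardsCompat R le ∧ CountablyDownwardsCompat R le

/-- `Dom_γ(T)`: the γ-dominating sequences of the relation `T`. -/
def GDomGamma {γ β : Type*} (T : γ → β → Prop) : Set (ℕ → β) :=
  {z | ∀ c : γ, {n : ℕ | ¬ T c (z n)}.Finite}

/-- ONE has a winning strategy in the game `G_γ(P,Q)`. -/
def OneWinsGgamma {α β γ : Type*} (R : α → β → Prop) (T : γ → β → Prop) : Prop :=
  ∃ σ : List β → α, ∀ b : ℕ → β,
    (∀ n, R (σ (GHist b n)) (b n)) → b ∈ GDomGamma T

/-- TWO has a winning strategy in the game `G_γ(P,Q)`. -/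
def TwoWinsGgamma {α β γ : Type*} (R : α → β → Prop) (T : γ → β → Prop) : Prop :=
  ∃ τ : List α → β, ∀ a : ℕ → α,
    (∀ n, R (a n) (τ (GHist a (n + 1)))) ∧
    (fun n => τ (GHist a (n + 1))) ∉ GDomGamma T

/-- ONE has a winning strategy in the game `G₁(𝒜, Dom_γ(T))`. -/
def OneWinsG1gamma {β γ : Type*} (𝒜 : Set (Set β)) (T : γ → β → Prop) : Prop :=
  ∃ σ : List β → Set β, (∀ h, σ h ∈ 𝒜) ∧
    ∀ b : ℕ → β, (∀ n, b n ∈ σ (GHist b n)) → b ∉ GDomGamma T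

/-- TWO has a winning strategy in the game `G₁(𝒜, Dom_γ(T))`. -/
def TwoWinsG1gamma {β γ : Type*} (𝒜 : Set (Set β)) (T : γ → β → Prop) : Prop :=
  ∃ τ : List (Set β) → β, ∀ S : ℕ → Set β, (∀ n, S n ∈ 𝒜) →
    (∀ n, τ (GHist S (n + 1)) ∈ S n) ∧
    (fun n => τ (GHist S (n + 1))) ∈ GDomGamma T

/-- The `ℵ₀`-modification of a relation: moves become nonempty countable subsets of `B`,
dominated pointwise. -/
def CountMod {α β : Type*} (R : α → β → Prop) :
    α → {E : Set β // E.Countable ∧ E.Nonempty} → Prop :=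
  fun a E => ∀ b ∈ E.1, R a b
section GameAux

open Classical

/-- Recursive simulation: the `n`-th output is computed by `F` from the history of
previous outputs and the `n`-th input. -/
noncomputable def gameSim {I O : Type*} (F : List O → I → O) (u : ℕ → I) : ℕ → O
  | n => F (List.ofFn fun i : Fin n => gameSim F u i) (u n)
decreasing_by exact i.isLt

theorem gameSim_eq {I O : Type*} (F : List O → I → O) (u : ℕ → I) (n : ℕ) :
    gameSim F u n = F (GHist (gameSim F u) n) (u n) := by
  rw [gameSim]; rfl

theorem gameSim_congr {I O : Type*} (F : List O → I → O) {u u' : ℕ → I} :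
    ∀ n, (∀ k ≤ n, u k = u' k) → gameSim F u n = gameSim F u' n := by
  intro n
  induction n using Nat.strong_induction_on with
  | _ n ih =>
    intro h
    rw [gameSim, gameSim, h n le_rfl]
    congr 1
    exact congrArg List.ofFn (funext fun i => ih i i.isLt
      (fun k hk => le_of_lt (lt_of_le_of_lt hk i.isLt) |> h k))

theorem ghist_succ {β : Type*} (b : ℕ → β) (n : ℕ) :
    GHist b (n + 1) = GHist b n ++ [b n] := by
  show List.ofFn _ = _
  rw [List.ofFn_succ']
  simp [GHist, List.concat_eq_append]

theorem ghist_length {β : Type*} (b : ℕ → β) (n : ℕ) : (GHist b n).length = n := by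
  simp [GHist]

theorem ghist_getD {β : Type*} (b : ℕ → β) {n k : ℕ} (h : k < n) (d : β) :
    (GHist b n).getD k d = b k := by
  rw [List.getD_eq_getElem _ _ (by simpa [GHist] using h)]
  simp [GHist]

theorem ghist_congr {β : Type*} {b b' : ℕ → β} {n : ℕ} (h : ∀ k < n, b k = b' k) :
    GHist b n = GHist b' n :=
  congrArg List.ofFn (funext fun i => h i i.isLt)

theorem gameSim_ghist {I O : Type*} (F : List O → I → O) (u : ℕ → I) (d : I) (n : ℕ) :
    gameSim F (fun k => (GHist u (n + 1)).getD k d) ((GHist u (n + 1)).length - 1)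
      = gameSim F u n := by
  rw [ghist_length]
  simp only [Nat.add_sub_cancel]
  exact gameSim_congr F n fun k hk => ghist_getD u (Nat.lt_succ_of_le hk) d

theorem ghist_gameSim_getD {I O : Type*} (F : List O → I → O) (u : ℕ → I) (d : I) (n : ℕ) :
    GHist (gameSim F (fun k => (GHist u n).getD k d)) ((GHist u n).length)
      = GHist (gameSim F u) n := by
  rw [ghist_length]
  exact ghist_congr fun k hk =>
    gameSim_congr F k fun j hj => ghist_getD u (lt_of_le_of_lt hj hk) d

theorem ghist_ext {β : Type*} (u : ℕ → β) (x : β) (n : ℕ) :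
    GHist (fun k => if k < n then u k else x) (n + 1) = GHist u n ++ [x] := by
  rw [ghist_succ]
  congr 1
  · exact ghist_congr fun k hk => if_pos hk
  · simp

end GameAux

section Directions

variable {α β γ : Type*}

theorem dir1a [Nonempty α] {R : α → β → Prop} {T : γ → β → Prop} (hR : IsTotalRel R) :
    OneWinsG R T → TwoWinsG1 (GDom R) (GDom T) := by
  classical
  rintro ⟨σ, hσ⟩
  have hβ : Nonempty β := ⟨(hR (Classical.arbitrary α)).choose⟩
  set F : List β → Set β → β := fun h s =>
    if hd : ∃ x ∈ s, R (σ h) x then hd.choose else Classical.arbitrary β with hF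
  refine ⟨fun l => gameSim F (fun k => l.getD k (∅ : Set β)) (l.length - 1), ?_⟩
  intro S hS
  have key : ∀ n, gameSim F (fun k => (GHist S (n + 1)).getD k (∅ : Set β))
      ((GHist S (n + 1)).length - 1) = gameSim F S n :=
    fun n => gameSim_ghist F S _ n
  have hmem : ∀ n, gameSim F S n ∈ S n ∧ R (σ (GHist (gameSim F S) n)) (gameSim F S n) := by
    intro n
    rw [gameSim_eq]
    have hd : ∃ x ∈ S n, R (σ (GHist (gameSim F S) n)) x := hS n _
    rw [hF]
    simp only [dif_pos hd]
    split_ifs with h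
    · exact ⟨h.choose_spec.1, h.choose_spec.2⟩
    · exact absurd hd h
  constructor
  · intro n
    simpa only [key n] using (hmem n).1
  · have hr : (fun n => gameSim F (fun k => (GHist S (n + 1)).getD k (∅ : Set β))
        ((GHist S (n + 1)).length - 1)) = gameSim F S := funext key
    rw [hr]
    exact hσ (gameSim F S) fun n => (hmem n).2

theorem dir1b [Nonempty α] {R : α → β → Prop} {T : γ → β → Prop} (hR : IsTotalRel R) :
    TwoWinsG1 (GDom R) (GDom T) → OneWinsG R T := by
  classical
  rintro ⟨τ, hτ⟩
  have hβ : Nonempty β := ⟨(hR (Classical.arbitrary α)).choose⟩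
  have huniv : (Set.univ : Set β) ∈ GDom R := fun a => ⟨(hR a).choose, trivial, (hR a).choose_spec⟩
  set F : List (Set β) → β → Set β := fun h x =>
    if hd : ∃ Z ∈ GDom R, τ (h ++ [Z]) = x then hd.choose else Set.univ with hF
  set Good : List (Set β) → Prop := fun h =>
    ∃ a, ∀ x, R a x → ∃ Z ∈ GDom R, τ (h ++ [Z]) = x with hGood
  set σ : List β → α := fun l =>
    if hg : Good (GHist (gameSim F (fun k => l.getD k (Classical.arbitrary β))) l.length)
    then hg.choose else Classical.arbitrary α with hσ
  refine ⟨σ, ?_⟩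
  intro b hb
  have hlist : ∀ n, GHist (gameSim F (fun k => (GHist b n).getD k (Classical.arbitrary β)))
      ((GHist b n).length) = GHist (gameSim F b) n :=
    fun n => ghist_gameSim_getD F b _ n
  have hσn : ∀ n, σ (GHist b n) =
      if hg : Good (GHist (gameSim F b) n) then hg.choose else Classical.arbitrary α := by
    intro n
    rw [hσ]
    simp only [hlist n]
  have main : ∀ n, gameSim F b n ∈ GDom R ∧ τ (GHist (gameSim F b) (n + 1)) = b n := by
    intro n
    induction n using Nat.strong_induction_on with
    | _ n ih =>
      have hgood : Good (GHist (gameSim F b) n) := by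
        by_contra hng
        simp only [hGood] at hng
        push_neg at hng
        set W : Set β := {x | ¬ ∃ Z ∈ GDom R, τ (GHist (gameSim F b) n ++ [Z]) = x} with hWdef
        have hW : W ∈ GDom R := by
          intro a
          obtain ⟨x, hx1, hx2⟩ := hng a
          refine ⟨x, ?_, hx1⟩
          rintro ⟨Z, hZ, he⟩
          exact hx2 Z hZ he
        set Z' : ℕ → Set β := fun k => if k < n then gameSim F b k else W with hZ'
        have hZ'dom : ∀ k, Z' k ∈ GDom R := by
          intro k
          rw [hZ']
          by_cases h : k < n
          · simpa only [if_pos h] using (ih k h).1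
          · simpa only [if_neg h] using hW
        have hin := (hτ Z' hZ'dom).1 n
        have hhist : GHist Z' (n + 1) = GHist (gameSim F b) n ++ [W] := ghist_ext _ W n
        rw [hhist] at hin
        have hZn : Z' n = W := by rw [hZ']; simp
        rw [hZn] at hin
        exact hin ⟨W, hW, rfl⟩
      have hRb := hb n
      rw [hσn n, dif_pos hgood] at hRb
      have hex : ∃ Z ∈ GDom R, τ (GHist (gameSim F b) n ++ [Z]) = b n :=
        hgood.choose_spec (b n) hRb
      constructor
      · rw [gameSim_eq, hF]
        simp only [dif_pos hex]
        split_ifs with h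
        · exact h.choose_spec.1
        · exact absurd hex h
      · rw [ghist_succ, gameSim_eq, hF]
        simp only [dif_pos hex]
        split_ifs with h
        · exact h.choose_spec.2
        · exact absurd hex h
  have hwin := (hτ (gameSim F b) fun n => (main n).1).2
  have hr : (fun n => τ (GHist (gameSim F b) (n + 1))) = b := funext fun n => (main n).2
  rwa [hr] at hwin

theorem dir2a [Nonempty α] {R : α → β → Prop} {T : γ → β → Prop} (hR : IsTotalRel R) :
    TwoWinsG R T → OneWinsG1 (GDom R) (GDom T) := by
  classical
  rintro ⟨τ, hτ⟩
  have hβ : Nonempty β := ⟨(hR (Classical.arbitrary α)).choose⟩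
  set F : List α → β → α := fun h x =>
    if hd : ∃ a, τ (h ++ [a]) = x then hd.choose else Classical.arbitrary α with hF
  set σ1 : List β → Set β := fun l =>
    {x | ∃ a, τ (GHist (gameSim F (fun k => l.getD k (Classical.arbitrary β))) l.length
      ++ [a]) = x} with hσ1
  refine ⟨σ1, ?_, ?_⟩
  · intro h a'
    set v : ℕ → α := gameSim F (fun k => h.getD k (Classical.arbitrary β)) with hv
    set aa : ℕ → α := fun j => if j < h.length then v j else a' with haa
    have hh : GHist aa (h.length + 1) = GHist v h.length ++ [a'] := ghist_ext v a' h.length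
    have hleg := (hτ aa).1 h.length
    rw [hh] at hleg
    have haam : aa h.length = a' := by rw [haa]; simp
    rw [haam] at hleg
    exact ⟨τ (GHist v h.length ++ [a']), ⟨a', rfl⟩, hleg⟩
  · intro b hb
    have hstep : ∀ n, τ (GHist (gameSim F b) (n + 1)) = b n := by
      intro n
      have hmem := hb n
      rw [hσ1] at hmem
      simp only [Set.mem_setOf_eq, ghist_gameSim_getD F b _ n] at hmem
      rw [ghist_succ, gameSim_eq, hF]
      simp only [dif_pos hmem]
      split_ifs with h
      · exact h.choose_spec
      · exact absurd hmem h
    have hwin := (hτ (gameSim F b)).2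
    have hr : (fun n => τ (GHist (gameSim F b) (n + 1))) = b := funext hstep
    rwa [hr] at hwin

theorem dir2b [Nonempty α] {R : α → β → Prop} {T : γ → β → Prop} (hR : IsTotalRel R) :
    OneWinsG1 (GDom R) (GDom T) → TwoWinsG R T := by
  classical
  rintro ⟨σ1, hdom, hwin⟩
  have hdom' : ∀ h a, ∃ x ∈ σ1 h, R a x := hdom
  set F : List β → α → β := fun h a => (hdom' h a).choose with hF
  refine ⟨fun l => gameSim F (fun k => l.getD k (Classical.arbitrary α)) (l.length - 1), ?_⟩
  intro a
  have key : ∀ n, gameSim F (fun k => (GHist a (n + 1)).getD k (Classical.arbitrary α))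
      ((GHist a (n + 1)).length - 1) = gameSim F a n :=
    fun n => gameSim_ghist F a _ n
  have hspec : ∀ n, gameSim F a n ∈ σ1 (GHist (gameSim F a) n) ∧ R (a n) (gameSim F a n) := by
    intro n
    rw [gameSim_eq, hF]
    exact ⟨(hdom' _ _).choose_spec.1, (hdom' _ _).choose_spec.2⟩
  constructor
  · intro n
    simpa only [key n] using (hspec n).2
  · have hr : (fun n => gameSim F (fun k => (GHist a (n + 1)).getD k (Classical.arbitrary α))
        ((GHist a (n + 1)).length - 1)) = gameSim F a := funext key
    rw [hr]
    exact hwin (gameSim F a) fun n => (hspec n).1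

end Directions

/-- For all relations `P = (A,B,R)` and `Q = (C,B,T)`, the games `G(P,Q)`
and `G₁(Dom(P), Dom(Q))` are dual. -/
theorem statement0 {α β γ : Type*} [Nonempty α] [Nonempty γ]
    (R : α → β → Prop) (T : γ → β → Prop)
    (hR : IsTotalRel R) (hT : IsTotalRel T) :
    (OneWinsG R T ↔ TwoWinsG1 (GDom R) (GDom T)) ∧
    (TwoWinsG R T ↔ OneWinsG1 (GDom R) (GDom T)) := by
  exact ⟨⟨dir1a hR, dir1b hR⟩, ⟨dir2a hR, dir2b hR⟩⟩
end

section
/- For every topological space X, the point-open game on X and the Rothberger game on X are dual games: ONE has a winning strategy in the point-open game if and only if TWO has a winning strategy in the Rothberger game, and TWO has a winning strategy in the point-open game if and only if ONE has a winning strategy in the Rothberger game. -/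
open Set

/-! ### Auxiliary machinery for statement1 -/

section GameAux

variable {β γ : Type*}

/-- Build a list of responses from a list of moves, where each response is computed by
`step` from the list of previous responses and the current move. -/
def GBuildAux (step : List β → γ → β) : List γ → List β
  | [] => []
  | u :: t => GBuildAux step t ++ [step (GBuildAux step t) u]

def GBuild (step : List β → γ → β) (l : List γ) : List β := GBuildAux step l.reverse

lemma GBuild_nil (step : List β → γ → β) : GBuild step [] = [] := rfl

lemma GBuild_concat (step : List β → γ → β) (l : List γ) (u : γ) :
    GBuild step (l ++ [u]) = GBuild step l ++ [step (GBuild step l) u] := by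
  simp [GBuild, GBuildAux]

lemma GHist_zero {b : ℕ → β} : GHist b 0 = [] := rfl

lemma GHist_succ (b : ℕ → β) (n : ℕ) : GHist b (n + 1) = GHist b n ++ [b n] := by
  rw [GHist, List.ofFn_succ']
  simp [GHist, List.concat_eq_append]

lemma GBuild_ghist (step : List β → γ → β) (a : ℕ → γ) (n : ℕ) :
    GBuild step (GHist a n) = GHist (fun k => step (GBuild step (GHist a k)) (a k)) n := by
  induction n with
  | zero => rfl
  | succ n ih =>
    rw [GHist_succ, GBuild_concat, GHist_succ]
    simp [ih]

lemma GHist_getD (l : List γ) (d : γ) : GHist (fun n => l.getD n d) l.length = l := by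
  apply List.ext_getElem
  · simp [GHist]
  · intro i h1 h2
    simp [GHist, List.getD_eq_getElem]

lemma mem_GBuild {P : β → Prop} (step : List β → γ → β)
    (hstep : ∀ p g, P (step p g)) : ∀ l, ∀ u ∈ GBuild step l, P u := by
  suffices h : ∀ l, ∀ u ∈ GBuildAux step l, P u by
    intro l u hu; exact h l.reverse u hu
  intro l
  induction l with
  | nil => simp [GBuildAux]
  | cons a t ih =>
    intro u hu
    simp [GBuildAux] at hu
    rcases hu with hu | hu
    · exact ih u hu
    · exact hu ▸ hstep _ _

/-- The last response built by `step` from the history `l`. -/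
def GLast (step : List β → γ → β) (d : β) (l : List γ) : β :=
  ((GBuild step l).getLast?).getD d

lemma GLast_concat (step : List β → γ → β) (d : β) (l : List γ) (u : γ) :
    GLast step d (l ++ [u]) = step (GBuild step l) u := by
  rw [GLast, GBuild_concat]
  simp

lemma getD_concat_length (l : List γ) (x d : γ) : (l ++ [x]).getD l.length d = x := by
  simp [List.getD_eq_getElem]

end GameAux

section TopAux

variable {X : Type*} [TopologicalSpace X]

attribute [local instance] Classical.propDecidable

set_option linter.unusedSectionVars false

lemma singleton_univ_openCover : ({Set.univ} : Set (Set X)) ∈ OpenCovers X := by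
  constructor
  · intro U hU; simp at hU; simp [hU]
  · simp

/-- Pick a member of the cover `𝒰` containing `x` (if one exists). -/
noncomputable def pickMem (𝒰 : Set (Set X)) (x : X) : Set X :=
  if h : ∃ U ∈ 𝒰, x ∈ U then h.choose else ∅

lemma pickMem_spec {𝒰 : Set (Set X)} {x : X} (h : ∃ U ∈ 𝒰, x ∈ U) :
    pickMem 𝒰 x ∈ 𝒰 ∧ x ∈ pickMem 𝒰 x := by
  rw [pickMem, dif_pos h]
  exact h.choose_spec

lemma exists_mem_of_cover {𝒰 : Set (Set X)} (h : 𝒰 ∈ OpenCovers X) (x : X) :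
    ∃ U ∈ 𝒰, x ∈ U := by
  have : x ∈ ⋃₀ 𝒰 := h.2 ▸ mem_univ x
  simpa using this

/-- For Galvin's hard direction: choose a cover whose `τ`-response is inside `V`. -/
noncomputable def coverChoice (τ : List (Set (Set X)) → Set X)
    (c : List (Set (Set X))) (V : Set X) : Set (Set X) :=
  if h : ∃ 𝒰 ∈ OpenCovers X, τ (c ++ [𝒰]) ⊆ V then h.choose else {Set.univ}

lemma coverChoice_mem (τ : List (Set (Set X)) → Set X)
    (c : List (Set (Set X))) (V : Set X) : coverChoice τ c V ∈ OpenCovers X := by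
  rw [coverChoice]
  split
  · next h => exact h.choose_spec.1
  · exact singleton_univ_openCover

lemma coverChoice_spec {τ : List (Set (Set X)) → Set X}
    {c : List (Set (Set X))} {V : Set X}
    (h : ∃ 𝒰 ∈ OpenCovers X, τ (c ++ [𝒰]) ⊆ V) :
    τ (c ++ [coverChoice τ c V]) ⊆ V := by
  rw [coverChoice, dif_pos h]
  exact h.choose_spec.2

/-- The key point of Galvin's argument for the history `c`. -/
noncomputable def keyPt [Nonempty X] (τ : List (Set (Set X)) → Set X)
    (c : List (Set (Set X))) : X :=
  if h : ∃ x : X, ∀ V : Set X, IsOpen V → x ∈ V →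
      ∃ 𝒰 ∈ OpenCovers X, τ (c ++ [𝒰]) ⊆ V then h.choose
  else Classical.arbitrary X

lemma keyPt_spec [Nonempty X] {τ : List (Set (Set X)) → Set X}
    {c : List (Set (Set X))}
    (h : ∃ x : X, ∀ V : Set X, IsOpen V → x ∈ V →
      ∃ 𝒰 ∈ OpenCovers X, τ (c ++ [𝒰]) ⊆ V) :
    ∀ V : Set X, IsOpen V → keyPt τ c ∈ V → ∃ 𝒰 ∈ OpenCovers X, τ (c ++ [𝒰]) ⊆ V := by
  rw [keyPt, dif_pos h]
  exact h.choose_spec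

/-- Recover the point that TWO (point-open) answered with `b`. -/
noncomputable def ptChoice [Nonempty X] (τ : List X → Set X)
    (p : List X) (b : Set X) : X :=
  if h : ∃ x : X, b = τ (p ++ [x]) then h.choose else Classical.arbitrary X

lemma ptChoice_spec [Nonempty X] {τ : List X → Set X} {p : List X} {b : Set X}
    (h : ∃ x : X, b = τ (p ++ [x])) : b = τ (p ++ [ptChoice τ p b]) := by
  rw [ptChoice, dif_pos h]
  exact h.choose_spec

end TopAux

section Statement1Aux

variable {X : Type*} [TopologicalSpace X]

lemma dirA1 (h : OneWinsPointOpen X) : TwoWinsG1 (OpenCovers X) (OpenCovers X) := by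
  obtain ⟨σ, hσ⟩ := h
  set step : List (Set X) → Set (Set X) → Set X := fun p 𝒰 => pickMem 𝒰 (σ p) with hstep
  refine ⟨GLast step ∅, ?_⟩
  intro S hS
  set b : ℕ → Set X := fun k => step (GBuild step (GHist S k)) (S k) with hbdef
  have hgb : ∀ n, GBuild step (GHist S n) = GHist b n := fun n => GBuild_ghist step S n
  have hτ : ∀ n, GLast step ∅ (GHist S (n + 1)) = b n := by
    intro n
    rw [GHist_succ, GLast_concat, hbdef]
  have hbn : ∀ n, b n = pickMem (S n) (σ (GHist b n)) := by
    intro n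
    simp only [hbdef]
    simp only [hstep]
    rw [hgb n]
  have hpick : ∀ n, b n ∈ S n ∧ σ (GHist b n) ∈ b n := by
    intro n
    rw [hbn n]
    exact pickMem_spec (exists_mem_of_cover (hS n) _)
  constructor
  · intro n
    rw [hτ n]
    exact (hpick n).1
  · have he : (fun n => GLast step ∅ (GHist S (n + 1))) = b := funext hτ
    rw [he]
    exact hσ b fun n => ⟨(hS n).1 _ (hpick n).1, (hpick n).2⟩

lemma dirA2 (h : TwoWinsG1 (OpenCovers X) (OpenCovers X)) : OneWinsPointOpen X := by
  obtain ⟨τ, hτ⟩ := h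
  have hne : Nonempty X := by
    by_contra hn
    rw [not_nonempty_iff] at hn
    have hemp : (∅ : Set (Set X)) ∈ OpenCovers X := by
      refine ⟨fun U hU => absurd hU (notMem_empty U), ?_⟩
      simp [Set.univ_eq_empty_iff.2 hn]
    have := (hτ (fun _ => ∅) fun _ => hemp).1 0
    exact absurd this (notMem_empty _)
  -- legality of τ on finite histories of covers
  have hleg : ∀ c : List (Set (Set X)), (∀ u ∈ c, u ∈ OpenCovers X) →
      ∀ 𝒰 ∈ OpenCovers X, τ (c ++ [𝒰]) ∈ 𝒰 := by
    intro c hc 𝒰 h𝒰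
    have hlmem : ∀ u ∈ c ++ [𝒰], u ∈ OpenCovers X := by
      intro u hu
      rcases List.mem_append.1 hu with hu | hu
      · exact hc u hu
      · simp at hu; exact hu ▸ h𝒰
    set S : ℕ → Set (Set X) := fun n => (c ++ [𝒰]).getD n {Set.univ} with hSdef
    have hS : ∀ n, S n ∈ OpenCovers X := by
      intro n
      simp only [hSdef]
      by_cases hn : n < (c ++ [𝒰]).length
      · simp only [List.getD_eq_getElem _ _ hn]
        exact hlmem _ (List.getElem_mem hn)
      · rw [List.getD_eq_default _ _ (not_lt.1 hn)]
        exact singleton_univ_openCover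
    have hh : GHist S (c.length + 1) = c ++ [𝒰] := by
      have h1 := GHist_getD (c ++ [𝒰]) ({Set.univ} : Set (Set X))
      simpa [hSdef] using h1
    have h2 := (hτ S hS).1 c.length
    rw [hh] at h2
    have h3 : S c.length = 𝒰 := by simp only [hSdef]; exact getD_concat_length c 𝒰 _
    rwa [h3] at h2
  -- the key lemma
  have hkey : ∀ c : List (Set (Set X)), (∀ u ∈ c, u ∈ OpenCovers X) →
      ∃ x : X, ∀ V : Set X, IsOpen V → x ∈ V →
        ∃ 𝒰 ∈ OpenCovers X, τ (c ++ [𝒰]) ⊆ V := by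
    intro c hc
    by_contra hcon
    push_neg at hcon
    choose V hVopen hVmem hV using hcon
    have hcov : Set.range V ∈ OpenCovers X := by
      refine ⟨?_, ?_⟩
      · rintro _ ⟨x, rfl⟩; exact hVopen x
      · rw [Set.sUnion_eq_univ_iff]
        intro x
        exact ⟨V x, ⟨x, rfl⟩, hVmem x⟩
    obtain ⟨x, hx⟩ := hleg c hc (Set.range V) hcov
    exact hV x (Set.range V) hcov (by rw [hx])
  -- the strategy
  set step : List (Set (Set X)) → Set X → Set (Set X) := fun c V => coverChoice τ c V
    with hstep
  refine ⟨fun l => keyPt τ (GBuild step l), ?_⟩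
  intro V hV
  set S : ℕ → Set (Set X) := fun n => step (GBuild step (GHist V n)) (V n) with hSdef
  have hgb : ∀ n, GBuild step (GHist V n) = GHist S n := fun n => GBuild_ghist step V n
  have hScov : ∀ n, S n ∈ OpenCovers X := by
    intro n; simp only [hSdef]; exact coverChoice_mem τ _ _
  have hmemcov : ∀ n, ∀ u ∈ GHist S n, u ∈ OpenCovers X := by
    intro n u hu
    rw [← hgb] at hu
    exact mem_GBuild step (fun p g => coverChoice_mem τ p g) _ u hu
  have hsub : ∀ n, τ (GHist S (n + 1)) ⊆ V n := by
    intro n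
    have hx := hkey (GHist S n) (hmemcov n)
    have h2 : keyPt τ (GHist S n) ∈ V n := by
      rw [← hgb n]; exact (hV n).2
    have hxe : ∃ 𝒰 ∈ OpenCovers X, τ (GHist S n ++ [𝒰]) ⊆ V n :=
      keyPt_spec hx (V n) (hV n).1 h2
    have h4 : S n = coverChoice τ (GHist S n) (V n) := by
      simp only [hSdef]
      simp only [hstep]
      rw [hgb n]
    rw [GHist_succ, h4]
    exact coverChoice_spec hxe
  have hwin := (hτ S hScov).2
  refine ⟨?_, ?_⟩
  · rintro _ ⟨n, rfl⟩; exact (hV n).1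
  · rw [Set.sUnion_eq_univ_iff]
    intro x
    have : x ∈ ⋃₀ Set.range fun n => τ (GHist S (n + 1)) := hwin.2 ▸ mem_univ x
    obtain ⟨_, ⟨n, rfl⟩, hxn⟩ := this
    exact ⟨V n, ⟨n, rfl⟩, hsub n hxn⟩

lemma dirB1 (h : TwoWinsPointOpen X) : OneWinsG1 (OpenCovers X) (OpenCovers X) := by
  obtain ⟨τ, hτ⟩ := h
  by_cases hne : Nonempty X
  case neg =>
    rw [not_nonempty_iff] at hne
    refine ⟨fun _ => ∅, fun _ => ?_, fun b hb => absurd (hb 0) (notMem_empty _)⟩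
    refine ⟨fun U hU => absurd hU (notMem_empty U), ?_⟩
    simp [Set.univ_eq_empty_iff.2 hne]
  case pos =>
  have hleg : ∀ (p : List X) (x : X), IsOpen (τ (p ++ [x])) ∧ x ∈ τ (p ++ [x]) := by
    intro p x
    set x' : ℕ → X := fun k => (p ++ [x]).getD k (Classical.arbitrary X) with hx'
    have h1 := (hτ x').1 p.length
    have hh : GHist x' (p.length + 1) = p ++ [x] := by
      have := GHist_getD (p ++ [x]) (Classical.arbitrary X)
      simpa [hx'] using this
    have hxl : x' p.length = x := by simp only [hx']; exact getD_concat_length p x _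
    rw [hh, hxl] at h1
    exact h1
  set step : List X → Set X → X := fun p b => ptChoice τ p b with hstep
  refine ⟨fun l => {W | ∃ x : X, W = τ (GBuild step l ++ [x])}, ?_, ?_⟩
  · intro l
    refine ⟨?_, ?_⟩
    · rintro U ⟨x, rfl⟩; exact (hleg _ x).1
    · rw [Set.sUnion_eq_univ_iff]
      intro y
      exact ⟨τ (GBuild step l ++ [y]), ⟨y, rfl⟩, (hleg _ y).2⟩
  · intro b hb
    set x : ℕ → X := fun n => step (GBuild step (GHist b n)) (b n) with hxdef
    have hgb : ∀ n, GBuild step (GHist b n) = GHist x n := fun n => GBuild_ghist step b n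
    have hbn : ∀ n, b n = τ (GHist x (n + 1)) := by
      intro n
      have h1 : ∃ y : X, b n = τ (GHist x n ++ [y]) := by
        have := hb n
        rw [mem_setOf_eq] at this
        rwa [hgb n] at this
      have h2 : x n = ptChoice τ (GHist x n) (b n) := by
        simp only [hxdef]
        simp only [hstep]
        rw [hgb n]
      rw [GHist_succ, h2]
      exact ptChoice_spec h1
    have he : b = fun n => τ (GHist x (n + 1)) := funext hbn
    rw [he]
    exact (hτ x).2

lemma dirB2 (h : OneWinsG1 (OpenCovers X) (OpenCovers X)) : TwoWinsPointOpen X := by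
  obtain ⟨σ, hσcov, hσ⟩ := h
  set step : List (Set X) → X → Set X := fun c x => pickMem (σ c) x with hstep
  refine ⟨GLast step ∅, ?_⟩
  intro x
  set b : ℕ → Set X := fun k => step (GBuild step (GHist x k)) (x k) with hbdef
  have hgb : ∀ n, GBuild step (GHist x n) = GHist b n := fun n => GBuild_ghist step x n
  have hτ : ∀ n, GLast step ∅ (GHist x (n + 1)) = b n := by
    intro n
    rw [GHist_succ, GLast_concat, hbdef]
  have hbn : ∀ n, b n = pickMem (σ (GHist b n)) (x n) := by
    intro n
    simp only [hbdef]
    simp only [hstep]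
    rw [hgb n]
  have hpick : ∀ n, b n ∈ σ (GHist b n) ∧ x n ∈ b n := by
    intro n
    rw [hbn n]
    exact pickMem_spec (exists_mem_of_cover (hσcov _) _)
  refine ⟨?_, ?_⟩
  · intro n
    rw [hτ n]
    exact ⟨(hσcov (GHist b n)).1 _ (hpick n).1, (hpick n).2⟩
  · have he : (fun n => GLast step ∅ (GHist x (n + 1))) = b := funext hτ
    rw [he]
    exact hσ b fun n => (hpick n).1

end Statement1Aux

/-- The point-open game on `X` and the Rothberger game
`G₁(𝒪_X, 𝒪_X)` on `X` are dual games. -/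
theorem statement1 (X : Type*) [TopologicalSpace X] :
    (OneWinsPointOpen X ↔ TwoWinsG1 (OpenCovers X) (OpenCovers X)) ∧
    (TwoWinsPointOpen X ↔ OneWinsG1 (OpenCovers X) (OpenCovers X)) := by
  exact ⟨⟨dirA1, dirA2⟩, ⟨dirB1, dirB2⟩⟩
end

section
/- For every topological space X and point x ∈ X, Gruenhage's game G^c_{O,P}(X,x) and the game G_1(Ω_x, Ω_x) are dual games: ONE has a winning strategy in G^c_{O,P}(X,x) if and only if TWO has a winning strategy in G_1(Ω_x, Ω_x), and TWO has a winning strategy in G^c_{O,P}(X,x) if and only if ONE has a winning strategy in G_1(Ω_x, Ω_x). -/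
open Set

namespace Stmt4Aux

open Classical

variable {X : Type*}

theorem ghist_succ (b : ℕ → X) (n : ℕ) : GHist b (n + 1) = GHist b n ++ [b n] := by
  rw [GHist, List.ofFn_succ', List.concat_eq_append]
  congr 1

/-- One step of the generic "picker": choose a point in `S ∩ σ prev` if possible. -/
noncomputable def pkStep (x : X) (σ : List X → Set X) (prev : List X) (S : Set X) : X :=
  if h : (S ∩ σ prev).Nonempty then h.some else x

/-- The generic picker: turn a history of sets into a history of picked points. -/
noncomputable def pk (x : X) (σ : List X → Set X) :
    List X → List (Set X) → List X
  | prev, [] => prev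
  | prev, S :: L => pk x σ (prev ++ [pkStep x σ prev S]) L

theorem pk_append (x : X) (σ : List X → Set X) (L : List (Set X)) :
    ∀ prev S, pk x σ prev (L ++ [S]) = pk x σ prev L ++ [pkStep x σ (pk x σ prev L) S] := by
  induction L with
  | nil => intro prev S; rfl
  | cons S0 L ih => intro prev S; simp only [List.cons_append, pk]; exact ih _ S

/-- The generic picker lemma used for both easy directions of duality. -/
theorem picker (x : X) (σ : List X → Set X) :
    ∃ τ : List (Set X) → X, ∀ m : ℕ → Set X,
      (∀ n prev, (m n ∩ σ prev).Nonempty) →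
      ∀ n, τ (GHist m (n + 1)) ∈
        m n ∩ σ (GHist (fun k => τ (GHist m (k + 1))) n) := by
  refine ⟨fun L => (pk x σ [] L).getLastD x, ?_⟩
  intro m hne
  set y : ℕ → X := fun k => (pk x σ [] (GHist m (k + 1))).getLastD x with hy
  have key : ∀ n, pk x σ [] (GHist m n) = GHist y n := by
    intro n
    induction n with
    | zero => rfl
    | succ n ih =>
      rw [ghist_succ m n, pk_append, ih, ghist_succ y n]
      congr 1
      show [pkStep x σ (GHist y n) (m n)] = [y n]
      have : y n = (pk x σ [] (GHist m (n + 1))).getLastD x := rfl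
      rw [this, ghist_succ m n, pk_append, ih, List.getLastD_concat]
  intro n
  have hyn : y n = pkStep x σ (GHist y n) (m n) := by
    show (pk x σ [] (GHist m (n + 1))).getLastD x = _
    rw [ghist_succ m n, pk_append, key n, List.getLastD_concat]
  have hne' := hne n (GHist y n)
  have : y n ∈ m n ∩ σ (GHist y n) := by
    rw [hyn, pkStep, dif_pos hne']; exact hne'.some_mem
  exact this

/-- One step of the generic "simulator": recover a set move from a picked point. -/
noncomputable def smStep (τ : List (Set X) → X) (Leg : Set X → Prop)
    (acc : List (Set X)) (yy : X) : Set X :=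
  if h : ∃ A, Leg A ∧ τ (acc ++ [A]) = yy then h.choose else Set.univ

/-- The generic simulator: turn a history of points into a history of set moves. -/
noncomputable def sm (τ : List (Set X) → X) (Leg : Set X → Prop) :
    List (Set X) → List X → List (Set X)
  | acc, [] => acc
  | acc, yy :: L => sm τ Leg (acc ++ [smStep τ Leg acc yy]) L

theorem sm_append (τ : List (Set X) → X) (Leg : Set X → Prop) (L : List X) :
    ∀ acc yy, sm τ Leg acc (L ++ [yy]) = sm τ Leg acc L ++ [smStep τ Leg (sm τ Leg acc L) yy] := by
  induction L with
  | nil => intro acc yy; rfl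
  | cons y0 L ih => intro acc yy; simp only [List.cons_append, sm]; exact ih _ yy

theorem sm_legal (τ : List (Set X) → X) (Leg : Set X → Prop) (hu : Leg Set.univ)
    (L : List X) : ∀ acc, (∀ A ∈ acc, Leg A) → ∀ A ∈ sm τ Leg acc L, Leg A := by
  induction L with
  | nil => intro acc hacc; exact hacc
  | cons y0 L ih =>
    intro acc hacc
    refine ih _ ?_
    intro A hA
    rcases List.mem_append.1 hA with h | h
    · exact hacc A h
    · rw [List.mem_singleton] at h
      subst h
      unfold smStep
      split
      · next hex => exact hex.choose_spec.1
      · exact hu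

theorem sm_ghist (τ : List (Set X) → X) (Leg : Set X → Prop) (y : ℕ → X) (n : ℕ) :
    sm τ Leg [] (GHist y n) =
      GHist (fun k => smStep τ Leg (sm τ Leg [] (GHist y k)) (y k)) n := by
  induction n with
  | zero => rfl
  | succ n ih =>
    rw [ghist_succ y n, sm_append, ih,
      ghist_succ (fun k => smStep τ Leg (sm τ Leg [] (GHist y k)) (y k)) n, ih]

/-- The infinite sequence obtained from a finite list, padded with `univ`. -/
def seqOf (L : List (Set X)) : ℕ → Set X := fun n => L.getD n Set.univ

theorem ghist_seqOf (L : List (Set X)) (n : ℕ) (h : n ≤ L.length) :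
    GHist (seqOf L) n = L.take n := by
  apply List.ext_getElem
  · simpa [GHist] using by omega
  · intro i h1 h2
    simp only [GHist, List.getElem_ofFn, seqOf]
    rw [List.getElem_take]
    rw [List.getD_eq_getElem]

theorem seqOf_mem (L : List (Set X)) (n : ℕ) :
    seqOf L n ∈ L ∨ seqOf L n = Set.univ := by
  by_cases h : n < L.length
  · left; rw [seqOf, List.getD_eq_getElem _ _ h]; exact List.getElem_mem _
  · right; exact List.getD_eq_default _ _ (by omega)

theorem ghist_seqOf_concat (p : List (Set X)) (C : Set X) :
    GHist (seqOf (p ++ [C])) p.length = p ∧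
      GHist (seqOf (p ++ [C])) (p.length + 1) = p ++ [C] ∧
      seqOf (p ++ [C]) p.length = C := by
  refine ⟨?_, ?_, ?_⟩
  · rw [ghist_seqOf _ _ (by simp), List.take_left]
  · rw [ghist_seqOf _ _ (by simp), List.take_of_length_le (by simp)]
  · show (p ++ [C]).getD p.length Set.univ = C
    rw [List.getD_eq_getElem _ _ (by simp)]
    simp

theorem univ_mem_omega {X : Type*} [TopologicalSpace X] (x : X) :
    Set.univ ∈ OmegaPt x := by
  simp [OmegaPt]

/-- The simulator play lemma: against a play `y` legal for `σ := G ∘ sm`, the recovered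
set moves `S` are legal and `τ`'s responses to them are exactly the `y n`. -/
theorem simulate (τ : List (Set X) → X) (Leg : Set X → Prop)
    (y : ℕ → X)
    (hy : ∀ n, ∃ A, Leg A ∧
      τ (GHist (fun k => smStep τ Leg (sm τ Leg [] (GHist y k)) (y k)) n ++ [A]) = y n) :
    ∀ n, Leg ((fun k => smStep τ Leg (sm τ Leg [] (GHist y k)) (y k)) n) ∧
      τ (GHist (fun k => smStep τ Leg (sm τ Leg [] (GHist y k)) (y k)) (n + 1)) = y n := by
  set S : ℕ → Set X := fun k => smStep τ Leg (sm τ Leg [] (GHist y k)) (y k) with hS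
  intro n
  have hSn : S n = smStep τ Leg (GHist S n) (y n) := by
    rw [hS]; simp only; rw [sm_ghist]
  have hex := hy n
  have hval : S n = hex.choose := by rw [hSn, smStep, dif_pos hex]
  have hspec := hex.choose_spec
  constructor
  · rw [hval]; exact hspec.1
  · rw [ghist_succ S n, hval]; exact hspec.2

end Stmt4Aux

/-- Gruenhage's game `G^c_{O,P}(X,x)` and the game `G₁(Ω_x, Ω_x)`
are dual games. -/
theorem statement4 (X : Type*) [TopologicalSpace X] (x : X) :
    (OneWinsGruenhage x ↔ TwoWinsG1 (OmegaPt x) (OmegaPt x)) ∧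
    (TwoWinsGruenhage x ↔ OneWinsG1 (OmegaPt x) (OmegaPt x)) := by
  open Stmt4Aux in
  constructor
  · constructor
    · -- OneWinsGruenhage → TwoWinsG1
      rintro ⟨σ, hleg, hwin⟩
      obtain ⟨τ, hτ⟩ := picker x σ
      refine ⟨τ, fun S hS => ?_⟩
      have hne : ∀ n prev, (S n ∩ σ prev).Nonempty := by
        intro n prev
        obtain ⟨ho, hx⟩ := hleg prev
        have := mem_closure_iff.1 (hS n) (σ prev) ho hx
        exact this.imp fun z hz => ⟨hz.2, hz.1⟩
      have h := hτ S hne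
      set y : ℕ → X := fun k => τ (GHist S (k + 1)) with hy
      refine ⟨fun n => (h n).1, ?_⟩
      exact hwin y fun n => (h n).2
    · -- TwoWinsG1 → OneWinsGruenhage
      rintro ⟨τ, hτ⟩
      set Leg : Set X → Prop := fun A => A ∈ OmegaPt x with hLeg
      set T : List (Set X) → Set X :=
        fun p => {z | ∃ A, Leg A ∧ τ (p ++ [A]) = z} with hT
      have key : ∀ p : List (Set X), (∀ A ∈ p, Leg A) → x ∈ interior (T p) := by
        intro p hp
        by_contra hxc
        have hC : (T p)ᶜ ∈ OmegaPt x := by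
          show x ∈ closure (T p)ᶜ
          rw [closure_compl]; exact hxc
        obtain ⟨h1, h2, h3⟩ := ghist_seqOf_concat p ((T p)ᶜ)
        have hlegS : ∀ n, seqOf (p ++ [(T p)ᶜ]) n ∈ OmegaPt x := by
          intro n
          rcases seqOf_mem (p ++ [(T p)ᶜ]) n with hmem | huniv
          · rcases List.mem_append.1 hmem with hmem | hmem
            · exact hp _ hmem
            · rw [List.mem_singleton] at hmem; rw [hmem]; exact hC
          · rw [huniv]; exact univ_mem_omega x
        have hplay := hτ (seqOf (p ++ [(T p)ᶜ])) hlegS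
        have hmemC := hplay.1 p.length
        rw [h2, h3] at hmemC
        exact hmemC ⟨(T p)ᶜ, hC, rfl⟩
      refine ⟨fun h => interior (T (sm τ Leg [] h)), fun h => ⟨isOpen_interior, ?_⟩, ?_⟩
      · exact key _ (sm_legal τ Leg (univ_mem_omega x) h [] (by simp))
      · intro y hy
        set S : ℕ → Set X :=
          fun k => smStep τ Leg (sm τ Leg [] (GHist y k)) (y k) with hS
        have hy' : ∀ n, ∃ A, Leg A ∧ τ (GHist S n ++ [A]) = y n := by
          intro n
          have h1 : y n ∈ interior (T (sm τ Leg [] (GHist y n))) := hy n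
          rw [sm_ghist τ Leg y n] at h1
          have h2 : y n ∈ T (GHist S n) := interior_subset h1
          exact h2
        have hsim := simulate τ Leg y hy'
        have hlegS : ∀ n, S n ∈ OmegaPt x := fun n => (hsim n).1
        have hplay := hτ S hlegS
        have : (fun n => τ (GHist S (n + 1))) = y := funext fun n => (hsim n).2
        rw [this] at hplay
        exact hplay.2
  · constructor
    · -- TwoWinsGruenhage → OneWinsG1
      rintro ⟨τ, hτ⟩
      set Leg : Set X → Prop := fun V => IsOpen V ∧ x ∈ V with hLeg
      set T : List (Set X) → Set X :=
        fun p => {z | ∃ A, Leg A ∧ τ (p ++ [A]) = z} with hT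
      have key : ∀ p : List (Set X), (∀ A ∈ p, Leg A) → T p ∈ OmegaPt x := by
        intro p hp
        show x ∈ closure (T p)
        rw [mem_closure_iff]
        intro W hW hxW
        obtain ⟨h1, h2, h3⟩ := ghist_seqOf_concat p W
        have hlegS : ∀ n, IsOpen (seqOf (p ++ [W]) n) ∧ x ∈ seqOf (p ++ [W]) n := by
          intro n
          rcases seqOf_mem (p ++ [W]) n with hmem | huniv
          · rcases List.mem_append.1 hmem with hmem | hmem
            · exact hp _ hmem
            · rw [List.mem_singleton] at hmem; rw [hmem]; exact ⟨hW, hxW⟩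
          · rw [huniv]; exact ⟨isOpen_univ, Set.mem_univ x⟩
        have hplay := hτ (seqOf (p ++ [W])) hlegS
        have hmemW := hplay.1 p.length
        rw [h2, h3] at hmemW
        exact ⟨τ (p ++ [W]), hmemW, ⟨W, ⟨hW, hxW⟩, rfl⟩⟩
      have hLegUniv : Leg Set.univ := ⟨isOpen_univ, Set.mem_univ x⟩
      refine ⟨fun h => T (sm τ Leg [] h), fun h => ?_, ?_⟩
      · exact key _ (sm_legal τ Leg hLegUniv h [] (by simp))
      · intro y hy
        set S : ℕ → Set X :=
          fun k => smStep τ Leg (sm τ Leg [] (GHist y k)) (y k) with hS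
        have hy' : ∀ n, ∃ A, Leg A ∧ τ (GHist S n ++ [A]) = y n := by
          intro n
          have h1 : y n ∈ T (sm τ Leg [] (GHist y n)) := hy n
          rw [sm_ghist τ Leg y n] at h1
          exact h1
        have hsim := simulate τ Leg y hy'
        have hlegS : ∀ n, IsOpen (S n) ∧ x ∈ S n := fun n => (hsim n).1
        have hplay := hτ S hlegS
        have : (fun n => τ (GHist S (n + 1))) = y := funext fun n => (hsim n).2
        rw [this] at hplay
        exact hplay.2
    · -- OneWinsG1 → TwoWinsGruenhage
      rintro ⟨σ, hleg, hwin⟩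
      obtain ⟨τ, hτ⟩ := picker x σ
      refine ⟨τ, fun V hV => ?_⟩
      have hne : ∀ n prev, (V n ∩ σ prev).Nonempty := by
        intro n prev
        obtain ⟨ho, hx⟩ := hV n
        exact mem_closure_iff.1 (hleg prev) (V n) ho hx
      have h := hτ V hne
      refine ⟨fun n => (h n).1, ?_⟩
      exact hwin _ fun n => (h n).2
end
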